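/- Set a = (1−r)·ħ₀·B₀/(r·θ₀·B₀−ħ₀), b = ħ₀·((r+s−r·s)·θ₀·B₀−ħ₀)/(r·θ₀·B₀−ħ₀), c = r·B₀, and d = ħ₀ + r·(s−1)·θ₀·B₀, and assume b ≠ 0, d ≠ 0, c/b > 0, and a/d > 0. Then the Gaussian ψ₀(x,y) = exp(−(c/(2b))·x² − (a/(2d))·y²) is a Schwartz function on ℝ², and it satisfies the first-order partial differential equation a·y·ψ₀(x,y) + i·b·(∂ψ₀/∂x)(x,y) + i·c·x·ψ₀(x,y) + d·(∂ψ₀/∂y)(x,y) = 0 at every point (x,y) ∈ ℝ². -/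

import Mathlib

open MeasureTheory Complex
open scoped ENNReal

noncomputable section

/-- The Gaussian `ψ₀(x,y) = exp(−(c/(2b))x² − (a/(2d))y²)`. -/
def gauss (a b c d : ℝ) : ℝ × ℝ → ℂ := fun p =>
  Complex.exp (-(c / (2 * b)) * p.1 ^ 2 - (a / (2 * d)) * p.2 ^ 2)

/-- 1D complex gaussian -/
def g1 (t : ℝ) : ℝ → ℂ := fun x => Complex.exp (-(t : ℂ) * (x : ℂ) ^ 2)

lemma g1_contDiff (t : ℝ) : ContDiff ℝ ⊤ (g1 t) := by
  apply Complex.contDiff_exp.comp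
  exact (contDiff_const.mul ((Complex.ofRealCLM.contDiff).pow 2))

lemma hasDerivAt_ofReal' (x : ℝ) : HasDerivAt (fun y : ℝ => (y : ℂ)) 1 x := by
  simpa using (hasDerivAt_id (x : ℂ)).comp_ofReal

lemma g1_hasDerivAt (t : ℝ) (x : ℝ) :
    HasDerivAt (g1 t) ((-2 * t * x) * g1 t x) x := by
  have h1 : HasDerivAt (fun y : ℝ => -(t : ℂ) * (y : ℂ) ^ 2)
      (-(t : ℂ) * (2 * (x:ℂ))) x := by
    simpa using (((hasDerivAt_pow 2 ((x:ℝ):ℂ)).const_mul (-(t : ℂ))).comp_ofReal)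
  have := h1.cexp
  convert this using 1
  · rfl
  · simp [g1]; ring

lemma polyg_hasDerivAt (t : ℝ) (P : Polynomial ℂ) (x : ℝ) :
    HasDerivAt (fun y : ℝ => P.eval (y : ℂ) * g1 t y)
      ((P.derivative + Polynomial.C (-2 * (t:ℂ)) * Polynomial.X * P).eval (x:ℂ) * g1 t x) x := by
  have hP : HasDerivAt (fun y : ℝ => P.eval (y : ℂ)) (P.derivative.eval (x:ℂ)) x :=
    (P.hasDerivAt (x : ℂ)).comp_ofReal
  have := hP.mul (g1_hasDerivAt t x)
  convert this using 1
  · rfl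
  · rfl
  simp [Polynomial.eval_add, Polynomial.eval_mul]
  ring

lemma iteratedDeriv_g1 (t : ℝ) (n : ℕ) :
    ∃ P : Polynomial ℂ, ∀ x : ℝ, iteratedDeriv n (g1 t) x = P.eval (x:ℂ) * g1 t x := by
  induction n with
  | zero => exact ⟨1, fun x => by simp⟩
  | succ n ih =>
    obtain ⟨P, hP⟩ := ih
    refine ⟨P.derivative + Polynomial.C (-2 * (t:ℂ)) * Polynomial.X * P, fun x => ?_⟩
    rw [iteratedDeriv_succ]
    have : deriv (iteratedDeriv n (g1 t)) x = deriv (fun y : ℝ => P.eval (y:ℂ) * g1 t y) x := by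
      congr 1; funext y; exact hP y
    rw [this, (polyg_hasDerivAt t P x).deriv]

lemma norm_g1 (t : ℝ) (x : ℝ) : ‖g1 t x‖ = Real.exp (-t * x ^ 2) := by
  have h : -(t : ℂ) * (x : ℂ) ^ 2 = ((-t * x ^ 2 : ℝ) : ℂ) := by push_cast; ring
  rw [g1, h, ← Complex.ofReal_exp, Complex.norm_real, Real.norm_eq_abs, abs_of_pos (Real.exp_pos _)]

/-- elementary gaussian moment bound -/
lemma pow_mul_exp_le (t : ℝ) (ht : 0 < t) (m : ℕ) (x : ℝ) :
    |x| ^ m * Real.exp (-t * x ^ 2) ≤ 1 + m.factorial / t ^ m := by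
  have he : Real.exp (-t * x ^ 2) ≤ 1 := by
    rw [Real.exp_le_one_iff]; nlinarith [sq_nonneg x]
  rcases le_or_gt (|x|) 1 with h | h
  · have h1 : |x| ^ m ≤ 1 := pow_le_one₀ (abs_nonneg _) h
    have : |x| ^ m * Real.exp (-t * x ^ 2) ≤ 1 :=
      mul_le_one₀ h1 (Real.exp_pos _).le he
    have hf : (0:ℝ) ≤ m.factorial / t ^ m := by positivity
    linarith
  · -- |x| > 1 : |x|^m ≤ (x^2)^m, and (x^2)^m exp(-t x²) ≤ m!/t^m
    have h1 : |x| ^ m ≤ (x ^ 2) ^ m := by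
      apply pow_le_pow_left₀ (abs_nonneg _)
      nlinarith [abs_nonneg x, _root_.sq_abs x]
    have key : (t * x ^ 2) ^ m / m.factorial ≤ Real.exp (t * x ^ 2) :=
      Real.pow_div_factorial_le_exp (x := t * x ^ 2) (by positivity) m
    have hfac : (0:ℝ) < m.factorial := by
      exact_mod_cast m.factorial_pos
    have key2 : t ^ m * (x ^ 2) ^ m ≤ m.factorial * Real.exp (t * x ^ 2) := by
      have h2 := (div_le_iff₀ hfac).mp key
      calc t ^ m * (x ^ 2) ^ m = (t * x ^ 2) ^ m := (mul_pow _ _ _).symm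
        _ ≤ Real.exp (t * x ^ 2) * m.factorial := h2
        _ = m.factorial * Real.exp (t * x ^ 2) := mul_comm _ _
    have hx2 : (x ^ 2) ^ m * Real.exp (-t * x ^ 2) ≤ m.factorial / t ^ m := by
      rw [neg_mul, Real.exp_neg, ← div_eq_mul_inv,
        div_le_div_iff₀ (Real.exp_pos _) (pow_pos ht m)]
      nlinarith [key2]
    calc |x| ^ m * Real.exp (-t * x ^ 2) ≤ (x ^ 2) ^ m * Real.exp (-t * x ^ 2) := by
          apply mul_le_mul_of_nonneg_right h1 (Real.exp_pos _).le
      _ ≤ m.factorial / t ^ m := hx2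
      _ ≤ 1 + m.factorial / t ^ m := by linarith

lemma poly_decay (t : ℝ) (ht : 0 < t) (P : Polynomial ℂ) (k : ℕ) :
    ∃ C : ℝ, ∀ x : ℝ, |x| ^ k * (‖P.eval (x:ℂ)‖ * Real.exp (-t * x ^ 2)) ≤ C := by
  induction P using Polynomial.induction_on' with
  | add p q hp hq =>
    obtain ⟨C1, h1⟩ := hp
    obtain ⟨C2, h2⟩ := hq
    refine ⟨C1 + C2, fun x => ?_⟩
    have hn : ‖(p + q).eval (x:ℂ)‖ ≤ ‖p.eval (x:ℂ)‖ + ‖q.eval (x:ℂ)‖ := by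
      rw [Polynomial.eval_add]; exact norm_add_le _ _
    have h3 : |x| ^ k * (‖(p+q).eval (x:ℂ)‖ * Real.exp (-t * x ^ 2)) ≤
        |x| ^ k * (‖p.eval (x:ℂ)‖ * Real.exp (-t * x ^ 2)) +
        |x| ^ k * (‖q.eval (x:ℂ)‖ * Real.exp (-t * x ^ 2)) := by
      have he := Real.exp_pos (-t * x ^ 2)
      have h4 : (0:ℝ) ≤ |x| ^ k := by positivity
      calc |x| ^ k * (‖(p+q).eval (x:ℂ)‖ * Real.exp (-t * x ^ 2))
          ≤ |x| ^ k * ((‖p.eval (x:ℂ)‖ + ‖q.eval (x:ℂ)‖) * Real.exp (-t * x ^ 2)) := by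
            exact mul_le_mul_of_nonneg_left
              (mul_le_mul_of_nonneg_right hn he.le) h4
        _ = |x| ^ k * (‖p.eval (x:ℂ)‖ * Real.exp (-t * x ^ 2)) +
            |x| ^ k * (‖q.eval (x:ℂ)‖ * Real.exp (-t * x ^ 2)) := by ring
    linarith [h1 x, h2 x]
  | monomial i c =>
    refine ⟨‖c‖ * (1 + (k + i).factorial / t ^ (k + i)), fun x => ?_⟩
    have h1 : ‖(Polynomial.monomial i c).eval (x:ℂ)‖ = ‖c‖ * |x| ^ i := by
      simp [Polynomial.eval_monomial, norm_mul, norm_pow, Complex.norm_real]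
    rw [h1]
    have h2 : |x| ^ k * (‖c‖ * |x| ^ i * Real.exp (-t * x ^ 2)) =
        ‖c‖ * (|x| ^ (k + i) * Real.exp (-t * x ^ 2)) := by
      rw [pow_add]; ring
    rw [h2]
    exact mul_le_mul_of_nonneg_left (pow_mul_exp_le t ht (k + i) x) (norm_nonneg c)

/-- decay of the 1D gaussian with nonneg constants -/
lemma g1_decay (t : ℝ) (ht : 0 < t) (k n : ℕ) :
    ∃ C : ℝ, 0 ≤ C ∧ ∀ x : ℝ, |x| ^ k * ‖iteratedFDeriv ℝ n (g1 t) x‖ ≤ C := by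
  obtain ⟨P, hP⟩ := iteratedDeriv_g1 t n
  obtain ⟨C, hC⟩ := poly_decay t ht P k
  refine ⟨max C 0, le_max_right _ _, fun x => ?_⟩
  rw [norm_iteratedFDeriv_eq_norm_iteratedDeriv, hP x]
  calc |x| ^ k * ‖P.eval (x:ℂ) * g1 t x‖
      = |x| ^ k * (‖P.eval (x:ℂ)‖ * Real.exp (-t * x ^ 2)) := by
        rw [norm_mul, norm_g1]
    _ ≤ C := hC x
    _ ≤ max C 0 := le_max_left _ _

lemma gauss_eq_prod (a b c d : ℝ) :
    gauss a b c d = fun p : ℝ × ℝ => g1 (c/(2*b)) p.1 * g1 (a/(2*d)) p.2 := by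
  funext p
  rw [gauss, g1, g1, ← Complex.exp_add]
  congr 1
  push_cast
  ring

lemma gauss_contDiff (a b c d : ℝ) : ContDiff ℝ ⊤ (gauss a b c d) := by
  rw [gauss_eq_prod]
  exact ((g1_contDiff _).comp contDiff_fst).mul ((g1_contDiff _).comp contDiff_snd)

lemma norm_iteratedFDeriv_comp_fst (F : ℝ → ℂ) (hF : ContDiff ℝ ⊤ F) (n : ℕ) (p : ℝ × ℝ) :
    ‖iteratedFDeriv ℝ n (fun q : ℝ × ℝ => F q.1) p‖ ≤ ‖iteratedFDeriv ℝ n F p.1‖ := by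
  have h := (ContinuousLinearMap.fst ℝ ℝ ℝ).iteratedFDeriv_comp_right hF p (i := n) le_top
  rw [show (fun q : ℝ × ℝ => F q.1) = F ∘ (ContinuousLinearMap.fst ℝ ℝ ℝ) from rfl, h]
  refine le_trans (ContinuousMultilinearMap.norm_compContinuousLinearMap_le _ _) ?_
  have h1 : ∏ _i : Fin n, ‖(ContinuousLinearMap.fst ℝ ℝ ℝ)‖ ≤ 1 :=
    Finset.prod_le_one (fun _ _ => norm_nonneg _)
      (fun _ _ => ContinuousLinearMap.norm_fst_le ..)
  have h2 := norm_nonneg (iteratedFDeriv ℝ n F ((ContinuousLinearMap.fst ℝ ℝ ℝ) p))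
  calc ‖iteratedFDeriv ℝ n F ((ContinuousLinearMap.fst ℝ ℝ ℝ) p)‖ *
        ∏ _i : Fin n, ‖(ContinuousLinearMap.fst ℝ ℝ ℝ)‖
      ≤ ‖iteratedFDeriv ℝ n F ((ContinuousLinearMap.fst ℝ ℝ ℝ) p)‖ * 1 :=
        mul_le_mul_of_nonneg_left h1 h2
    _ = ‖iteratedFDeriv ℝ n F p.1‖ := by rw [mul_one]; rfl

lemma norm_iteratedFDeriv_comp_snd (G : ℝ → ℂ) (hG : ContDiff ℝ ⊤ G) (n : ℕ) (p : ℝ × ℝ) :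
    ‖iteratedFDeriv ℝ n (fun q : ℝ × ℝ => G q.2) p‖ ≤ ‖iteratedFDeriv ℝ n G p.2‖ := by
  have h := (ContinuousLinearMap.snd ℝ ℝ ℝ).iteratedFDeriv_comp_right hG p (i := n) le_top
  rw [show (fun q : ℝ × ℝ => G q.2) = G ∘ (ContinuousLinearMap.snd ℝ ℝ ℝ) from rfl, h]
  refine le_trans (ContinuousMultilinearMap.norm_compContinuousLinearMap_le _ _) ?_
  have h1 : ∏ _i : Fin n, ‖(ContinuousLinearMap.snd ℝ ℝ ℝ)‖ ≤ 1 :=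
    Finset.prod_le_one (fun _ _ => norm_nonneg _)
      (fun _ _ => ContinuousLinearMap.norm_snd_le ..)
  have h2 := norm_nonneg (iteratedFDeriv ℝ n G ((ContinuousLinearMap.snd ℝ ℝ ℝ) p))
  calc ‖iteratedFDeriv ℝ n G ((ContinuousLinearMap.snd ℝ ℝ ℝ) p)‖ *
        ∏ _i : Fin n, ‖(ContinuousLinearMap.snd ℝ ℝ ℝ)‖
      ≤ ‖iteratedFDeriv ℝ n G ((ContinuousLinearMap.snd ℝ ℝ ℝ) p)‖ * 1 :=
        mul_le_mul_of_nonneg_left h1 h2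
    _ = ‖iteratedFDeriv ℝ n G p.2‖ := by rw [mul_one]; rfl

lemma norm_prod_pow_le (p : ℝ × ℝ) (k : ℕ) : ‖p‖ ^ k ≤ |p.1| ^ k + |p.2| ^ k := by
  have h : ‖p‖ = max |p.1| |p.2| := rfl
  rw [h]
  rcases max_cases |p.1| |p.2| with ⟨h1, _⟩ | ⟨h1, _⟩ <;> rw [h1] <;>
    [(have : (0:ℝ) ≤ |p.2| ^ k := by positivity);
     (have : (0:ℝ) ≤ |p.1| ^ k := by positivity)] <;> linarith

lemma gauss_decay (a b c d : ℝ) (hcb : 0 < c / b) (had : 0 < a / d) (k n : ℕ) :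
    ∃ C : ℝ, ∀ p : ℝ × ℝ, ‖p‖ ^ k * ‖iteratedFDeriv ℝ n (gauss a b c d) p‖ ≤ C := by
  have ht1 : 0 < c / (2 * b) := by
    have : c / (2 * b) = c / b / 2 := by ring
    rw [this]; linarith
  have ht2 : 0 < a / (2 * d) := by
    have : a / (2 * d) = a / d / 2 := by ring
    rw [this]; linarith
  obtain ⟨D1, hD1nn, hD1⟩ :
      ∃ D : ℕ → ℕ → ℝ, (∀ k' n', 0 ≤ D k' n') ∧
        ∀ k' n' (x : ℝ), |x| ^ k' * ‖iteratedFDeriv ℝ n' (g1 (c / (2*b))) x‖ ≤ D k' n' := by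
    choose D h1 h2 using fun k' n' => g1_decay _ ht1 k' n'
    exact ⟨D, h1, h2⟩
  obtain ⟨D2, hD2nn, hD2⟩ :
      ∃ D : ℕ → ℕ → ℝ, (∀ k' n', 0 ≤ D k' n') ∧
        ∀ k' n' (x : ℝ), |x| ^ k' * ‖iteratedFDeriv ℝ n' (g1 (a / (2*d))) x‖ ≤ D k' n' := by
    choose D h1 h2 using fun k' n' => g1_decay _ ht2 k' n'
    exact ⟨D, h1, h2⟩
  refine ⟨∑ i ∈ Finset.range (n+1),
      (n.choose i : ℝ) * (D1 k i * D2 0 (n-i) + D1 0 i * D2 k (n-i)), fun p => ?_⟩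
  have hF2 : ContDiff ℝ ⊤ (fun q : ℝ × ℝ => g1 (c / (2*b)) q.1) :=
    (g1_contDiff _).comp contDiff_fst
  have hG2 : ContDiff ℝ ⊤ (fun q : ℝ × ℝ => g1 (a / (2*d)) q.2) :=
    (g1_contDiff _).comp contDiff_snd
  have hmul := norm_iteratedFDeriv_mul_le (𝕜 := ℝ) hF2 hG2 p (n := n) le_top
  have hre : gauss a b c d =
      fun q : ℝ × ℝ => (fun q : ℝ × ℝ => g1 (c / (2*b)) q.1) q *
        (fun q : ℝ × ℝ => g1 (a / (2*d)) q.2) q := gauss_eq_prod a b c d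
  rw [hre]
  have hk := norm_prod_pow_le p k
  have hstep : ‖p‖ ^ k * ‖iteratedFDeriv ℝ n
      (fun q : ℝ × ℝ => (fun q : ℝ × ℝ => g1 (c / (2*b)) q.1) q *
        (fun q : ℝ × ℝ => g1 (a / (2*d)) q.2) q) p‖ ≤
      (|p.1| ^ k + |p.2| ^ k) * ∑ i ∈ Finset.range (n+1), (n.choose i : ℝ) *
        ‖iteratedFDeriv ℝ i (fun q : ℝ × ℝ => g1 (c / (2*b)) q.1) p‖ *
        ‖iteratedFDeriv ℝ (n-i) (fun q : ℝ × ℝ => g1 (a / (2*d)) q.2) p‖ := by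
    apply mul_le_mul hk hmul (norm_nonneg _)
    have : (0:ℝ) ≤ |p.1| ^ k := by positivity
    have : (0:ℝ) ≤ |p.2| ^ k := by positivity
    linarith
  refine hstep.trans ?_
  rw [Finset.mul_sum]
  apply Finset.sum_le_sum
  intro i _
  set Ai := ‖iteratedFDeriv ℝ i (fun q : ℝ × ℝ => g1 (c / (2*b)) q.1) p‖ with hAi
  set Bj := ‖iteratedFDeriv ℝ (n-i) (fun q : ℝ × ℝ => g1 (a / (2*d)) q.2) p‖ with hBj
  have hAle : Ai ≤ ‖iteratedFDeriv ℝ i (g1 (c / (2*b))) p.1‖ :=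
    norm_iteratedFDeriv_comp_fst _ (g1_contDiff _) i p
  have hBle : Bj ≤ ‖iteratedFDeriv ℝ (n-i) (g1 (a / (2*d))) p.2‖ :=
    norm_iteratedFDeriv_comp_snd _ (g1_contDiff _) (n-i) p
  have hA0 : (0:ℝ) ≤ Ai := norm_nonneg _
  have hB0 : (0:ℝ) ≤ Bj := norm_nonneg _
  have hxk : (0:ℝ) ≤ |p.1| ^ k := by positivity
  have hyk : (0:ℝ) ≤ |p.2| ^ k := by positivity
  -- key one-variable bounds
  have f1 : |p.1| ^ k * Ai ≤ D1 k i := by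
    calc |p.1| ^ k * Ai ≤ |p.1| ^ k * ‖iteratedFDeriv ℝ i (g1 (c / (2*b))) p.1‖ :=
          mul_le_mul_of_nonneg_left hAle hxk
      _ ≤ D1 k i := hD1 k i p.1
  have f3 : Ai ≤ D1 0 i := by
    have := hD1 0 i p.1
    simp only [pow_zero, one_mul] at this
    exact hAle.trans this
  have f2 : Bj ≤ D2 0 (n-i) := by
    have := hD2 0 (n-i) p.2
    simp only [pow_zero, one_mul] at this
    exact hBle.trans this
  have f4 : |p.2| ^ k * Bj ≤ D2 k (n-i) := by
    calc |p.2| ^ k * Bj ≤ |p.2| ^ k * ‖iteratedFDeriv ℝ (n-i) (g1 (a / (2*d))) p.2‖ :=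
          mul_le_mul_of_nonneg_left hBle hyk
      _ ≤ D2 k (n-i) := hD2 k (n-i) p.2
  have hch : (0:ℝ) ≤ (n.choose i : ℝ) := by positivity
  have key : (|p.1| ^ k + |p.2| ^ k) * (Ai * Bj) ≤
      D1 k i * D2 0 (n-i) + D1 0 i * D2 k (n-i) := by
    have t1 : (|p.1| ^ k * Ai) * Bj ≤ D1 k i * D2 0 (n-i) :=
      mul_le_mul f1 f2 hB0 ((mul_nonneg hxk hA0).trans f1 |>.trans (le_refl _) |> fun _ => (hD1nn k i)) |>.trans (le_refl _)
    have t2 : Ai * (|p.2| ^ k * Bj) ≤ D1 0 i * D2 k (n-i) :=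
      mul_le_mul f3 f4 (mul_nonneg hyk hB0) (hD1nn 0 i)
    nlinarith [t1, t2]
  calc (|p.1| ^ k + |p.2| ^ k) * ((n.choose i : ℝ) * Ai * Bj)
      = (n.choose i : ℝ) * ((|p.1| ^ k + |p.2| ^ k) * (Ai * Bj)) := by ring
    _ ≤ (n.choose i : ℝ) * (D1 k i * D2 0 (n-i) + D1 0 i * D2 k (n-i)) :=
        mul_le_mul_of_nonneg_left key hch

lemma gauss_hasFDerivAt (a b c d : ℝ) (p : ℝ × ℝ) :
    HasFDerivAt (gauss a b c d)
      (Complex.exp (-(↑c / (2 * ↑b)) * (↑p.1:ℂ) ^ 2 - (↑a / (2 * ↑d)) * (↑p.2:ℂ) ^ 2) •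
        ((-(↑c / (2 * ↑b)) * (2 * (↑p.1:ℂ))) •
            (Complex.ofRealCLM.comp (ContinuousLinearMap.fst ℝ ℝ ℝ)) +
          (-(↑a / (2 * ↑d)) * (2 * (↑p.2:ℂ))) •
            (Complex.ofRealCLM.comp (ContinuousLinearMap.snd ℝ ℝ ℝ)))) p := by
  set Lx := Complex.ofRealCLM.comp (ContinuousLinearMap.fst ℝ ℝ ℝ) with hLx
  set Ly := Complex.ofRealCLM.comp (ContinuousLinearMap.snd ℝ ℝ ℝ) with hLy
  have hx : HasFDerivAt (fun q : ℝ × ℝ => ((q.1 : ℂ))) Lx p :=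
    Complex.ofRealCLM.hasFDerivAt.comp p hasFDerivAt_fst
  have hy : HasFDerivAt (fun q : ℝ × ℝ => ((q.2 : ℂ))) Ly p :=
    Complex.ofRealCLM.hasFDerivAt.comp p hasFDerivAt_snd
  have hx2 : HasFDerivAt (fun q : ℝ × ℝ => ((q.1:ℂ)) ^ 2)
      ((2 * (↑p.1:ℂ)) • Lx) p := by
    have h := hx.mul hx
    have he : ((p.1:ℂ)) • Lx + ((p.1:ℂ)) • Lx = (2 * (↑p.1:ℂ)) • Lx := by
      apply ContinuousLinearMap.ext; intro v
      simp only [ContinuousLinearMap.add_apply, ContinuousLinearMap.smul_apply, smul_eq_mul]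
      ring
    rw [← he]
    simpa [pow_two, Pi.mul_def] using h
  have hy2 : HasFDerivAt (fun q : ℝ × ℝ => ((q.2:ℂ)) ^ 2)
      ((2 * (↑p.2:ℂ)) • Ly) p := by
    have h := hy.mul hy
    have he : ((p.2:ℂ)) • Ly + ((p.2:ℂ)) • Ly = (2 * (↑p.2:ℂ)) • Ly := by
      apply ContinuousLinearMap.ext; intro v
      simp only [ContinuousLinearMap.add_apply, ContinuousLinearMap.smul_apply, smul_eq_mul]
      ring
    rw [← he]
    simpa [pow_two, Pi.mul_def] using h
  have hfx : HasFDerivAt (fun q : ℝ × ℝ => -(↑c / (2 * ↑b)) * ((q.1:ℂ)) ^ 2)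
      ((-((c:ℂ) / (2 * (b:ℂ)))) • ((2 * (↑p.1:ℂ)) • Lx)) p := hx2.const_mul _
  have hfy : HasFDerivAt (fun q : ℝ × ℝ => (↑a / (2 * ↑d)) * ((q.2:ℂ)) ^ 2)
      ((((a:ℂ) / (2 * (d:ℂ)))) • ((2 * (↑p.2:ℂ)) • Ly)) p := hy2.const_mul _
  have hinner := (hfx.sub hfy).cexp
  have hL : Complex.exp (-(↑c / (2 * ↑b)) * (↑p.1:ℂ) ^ 2 - (↑a / (2 * ↑d)) * (↑p.2:ℂ) ^ 2) •
        ((-(↑c / (2 * ↑b)) * (2 * (↑p.1:ℂ))) • Lx + (-(↑a / (2 * ↑d)) * (2 * (↑p.2:ℂ))) • Ly) =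
      Complex.exp (-(↑c / (2 * ↑b)) * (↑p.1:ℂ) ^ 2 - (↑a / (2 * ↑d)) * (↑p.2:ℂ) ^ 2) •
        ((-((c:ℂ) / (2 * (b:ℂ)))) • ((2 * (↑p.1:ℂ)) • Lx) -
          (((a:ℂ) / (2 * (d:ℂ)))) • ((2 * (↑p.2:ℂ)) • Ly)) := by
    apply ContinuousLinearMap.ext; intro v
    simp only [ContinuousLinearMap.smul_apply, ContinuousLinearMap.add_apply,
      ContinuousLinearMap.sub_apply, smul_eq_mul]
    ring
  rw [hL]
  exact hinner

lemma gauss_fderiv_fst (a b c d : ℝ) (p : ℝ × ℝ) :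
    fderiv ℝ (gauss a b c d) p (1, 0) =
      (-(↑c / (2 * ↑b)) * (2 * (↑p.1:ℂ))) * gauss a b c d p := by
  rw [(gauss_hasFDerivAt a b c d p).fderiv]
  simp [gauss, ContinuousLinearMap.smul_apply, ContinuousLinearMap.add_apply,
    ContinuousLinearMap.comp_apply]
  ring

lemma gauss_fderiv_snd (a b c d : ℝ) (p : ℝ × ℝ) :
    fderiv ℝ (gauss a b c d) p (0, 1) =
      (-(↑a / (2 * ↑d)) * (2 * (↑p.2:ℂ))) * gauss a b c d p := by
  rw [(gauss_hasFDerivAt a b c d p).fderiv]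
  simp [gauss, ContinuousLinearMap.smul_apply, ContinuousLinearMap.add_apply,
    ContinuousLinearMap.comp_apply]
  ring

theorem stmt12 (hb th B r s : ℝ) (hhb : hb ≠ 0) (hth : th ≠ 0) (hB : B ≠ 0)
    (hnd : hb - th * B ≠ 0) (hrs : r * th * B ≠ hb)
    (a b c d : ℝ)
    (ha : a = (1 - r) * hb * B / (r * th * B - hb))
    (hbdef : b = hb * ((r + s - r * s) * th * B - hb) / (r * th * B - hb))
    (hc : c = r * B)
    (hd : d = hb + r * (s - 1) * th * B)
    (hb0 : b ≠ 0) (hd0 : d ≠ 0) (hcb : 0 < c / b) (had : 0 < a / d) :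
    -- ψ₀ is a Schwartz function on ℝ²
    (∃ g : SchwartzMap (ℝ × ℝ) ℂ, ⇑g = gauss a b c d) ∧
    -- ψ₀ satisfies the first-order PDE
    (∀ p : ℝ × ℝ,
      a * p.2 * gauss a b c d p
        + Complex.I * b * fderiv ℝ (gauss a b c d) p (1, 0)
        + Complex.I * c * p.1 * gauss a b c d p
        + d * fderiv ℝ (gauss a b c d) p (0, 1) = 0) := by
  constructor
  · exact ⟨⟨gauss a b c d, (gauss_contDiff a b c d).of_le le_top,
      fun k n => gauss_decay a b c d hcb had k n⟩, rfl⟩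
  · intro p
    rw [gauss_fderiv_fst, gauss_fderiv_snd]
    have hbC : (b : ℂ) ≠ 0 := Complex.ofReal_ne_zero.mpr hb0
    have hdC : (d : ℂ) ≠ 0 := Complex.ofReal_ne_zero.mpr hd0
    field_simp
    ring
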